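/- Let n ≥ 3 and let C_n be the cycle graph on n vertices. Then the f-polynomial of the graphical zonotope Z_{C_n} satisfies Σ_{k=0}^{n−1} f_k(Z_{C_n})·q^k = q^n + q^{n−1} + (q+2)^n − 2(q+1)^n, as an identity in ℤ[q]. -/

import Mathlib

open Polynomial

/-- The graphical zonotope of `G`, as the Minkowski sum over the edges `{i,j}` of `G`
of the segments `[-(e_i - e_j), e_i - e_j]`, described via antisymmetric coefficient
functions supported on edges. -/
def graphicalZonotope {V : Type} [Fintype V] [DecidableEq V] (G : SimpleGraph V) :
    Set (V → ℝ) :=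
  { x | ∃ c : V → V → ℝ, (∀ u v, c u v = - c v u) ∧ (∀ u v, ¬ G.Adj u v → c u v = 0) ∧
      (∀ u v, |c u v| ≤ 1) ∧ x = fun w => ∑ u, c w u }

/-- `faceCount G k` is the number of nonempty exposed faces of the graphical zonotope of `G`
whose affine span has dimension `k`. -/
noncomputable def faceCount {V : Type} [Fintype V] [DecidableEq V] (G : SimpleGraph V)
    (k : ℕ) : ℕ :=
  Nat.card { F : Set (V → ℝ) // F.Nonempty ∧ IsExposed ℝ (graphicalZonotope G) F ∧
      Module.finrank ℝ (affineSpan ℝ F).direction = k }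

/-- The number of acyclic orientations of `G`. -/
noncomputable def acyclicOrientationCount {V : Type} (G : SimpleGraph V) : ℕ :=
  Nat.card { r : V → V → Prop // (∀ u v, r u v → G.Adj u v) ∧
      (∀ u v, G.Adj u v → Xor' (r u v) (r v u)) ∧ (∀ v, ¬ Relation.TransGen r v v) }

/-- rank of the induced subgraph on `s` : `|s| - #components`. -/
noncomputable def inducedRank {V : Type} (G : SimpleGraph V) (s : Set V) : ℕ :=
  Nat.card s - Nat.card (G.induce s).ConnectedComponent

/-- The `q`-analog of the chromatic polynomial evaluated at `d` colors, an element of `ℤ[q]`. -/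
noncomputable def chromQ {V : Type} [Fintype V] [DecidableEq V] (G : SimpleGraph V) (d : ℕ) : Polynomial ℤ :=
  ∑ f : V → Fin d, (X : Polynomial ℤ) ^ (∑ i : Fin d, inducedRank G (f ⁻¹' {i}))

/-- `H` is (the spanning subgraph determined by) a flat of `G`. -/
def IsFlatOf {V : Type} (G H : SimpleGraph V) : Prop :=
  H ≤ G ∧ ∀ u v, G.Adj u v → H.Reachable u v → H.Adj u v

/-- The rank of a spanning subgraph `H`: `|V| - c(H)`. -/
noncomputable def flatRank {V : Type} [Fintype V] (H : SimpleGraph V) : ℕ :=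
  Fintype.card V - Nat.card H.ConnectedComponent

/-- The contraction `G/H`: vertices are the connected components of `H`, two distinct
components being adjacent iff some edge of `G` joins them. -/
def contractFlat {V : Type} (G H : SimpleGraph V) : SimpleGraph H.ConnectedComponent where
  Adj C D := C ≠ D ∧ ∃ u v, G.Adj u v ∧ H.connectedComponentMk u = C ∧
      H.connectedComponentMk v = D
  symm := ⟨by
    rintro C D ⟨hne, u, v, hadj, hu, hv⟩
    exact ⟨hne.symm, v, u, hadj.symm, hv, hu⟩⟩
  loopless := ⟨by rintro C ⟨hne, -⟩; exact hne rfl⟩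

set_option linter.dupNamespace false
set_option linter.unusedVariables false
set_option linter.unusedSectionVars false
open Finset
namespace CZ

noncomputable def T (n : ℕ) [NeZero n] : (Fin n → ℝ) →ₗ[ℝ] (Fin n → ℝ) where
  toFun t := fun w => t (w - 1) - t w
  map_add' s t := by funext w; simp only [Pi.add_apply]; ring
  map_smul' c t := by funext w; simp only [Pi.smul_apply, smul_eq_mul, RingHom.id_apply]; ring

def eB (n : ℕ) (i : Fin n) : Fin n → ℝ := fun j => if i = j then 1 else 0

def cubeF (n : ℕ) (σ : Fin n → SignType) : Set (Fin n → ℝ) :=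
  {t | (∀ i, |t i| ≤ 1) ∧ ∀ i, σ i ≠ 0 → t i = (σ i : ℝ)}

def faceS (n : ℕ) [NeZero n] (σ : Fin n → SignType) : Set (Fin n → ℝ) := T n '' cubeF n σ

def Adm {n : ℕ} (σ : Fin n → SignType) : Prop :=
  σ = 0 ∨ ((∃ i, σ i = 1) ∧ (∃ i, σ i = -1))

def zed {n : ℕ} (σ : Fin n → SignType) : ℕ := (univ.filter (fun i => σ i = 0)).card

def dimF (n : ℕ) (σ : Fin n → SignType) : ℕ := if σ = 0 then n - 1 else zed σ

variable {n : ℕ} [NeZero n]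

lemma T_apply (t : Fin n → ℝ) (w : Fin n) : T n t w = t (w - 1) - t w := rfl

lemma one_one_ne (hn : 3 ≤ n) : (1 : Fin n) + 1 ≠ 0 := by
  have h1 : (1 : Fin n).val = 1 := by
    rw [Fin.val_one', Nat.mod_eq_of_lt (by omega)]
  intro h
  have h2 := congrArg Fin.val h
  simp only [Fin.add_def, Fin.val_zero, h1] at h2
  rw [Nat.mod_eq_of_lt (by omega)] at h2
  omega

lemma add_one_ne_sub_one (hn : 3 ≤ n) (w : Fin n) : w + 1 ≠ w - 1 := by
  intro h
  apply one_one_ne hn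
  have h2 : w + (1 + 1) = w + 0 := by rw [← add_assoc, h]; abel
  exact add_left_cancel h2

lemma no_both (hn : 3 ≤ n) {u v : Fin n} : ¬(u = v + 1 ∧ v = u + 1) := by
  rintro ⟨h1, h2⟩
  apply one_one_ne hn
  have h3 : u + (1 + 1) = u + 0 := by rw [← add_assoc, ← h2, ← h1, add_zero]
  exact add_left_cancel h3

lemma adj_iff (hn : 3 ≤ n) {u v : Fin n} :
    (SimpleGraph.cycleGraph n).Adj u v ↔ u = v + 1 ∨ v = u + 1 := by
  obtain ⟨m, rfl⟩ : ∃ m, n = m + 1 + 2 := ⟨n - 3, by omega⟩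
  rw [SimpleGraph.cycleGraph_adj, sub_eq_iff_eq_add, sub_eq_iff_eq_add,
    add_comm (1 : Fin _) v, add_comm (1 : Fin _) u]

open Fin.NatCast in
lemma cyc_const (hn : 3 ≤ n) {d : Fin n → ℝ} (h : ∀ w, d (w - 1) = d w) : ∀ j, d j = d 0 := by
  have key : ∀ m : ℕ, d (m : Fin n) = d 0 := by
    intro m
    induction m with
    | zero => norm_num
    | succ k ih =>
        have hk := h ((k : Fin n) + 1)
        have he : (k : Fin n) + 1 - 1 = (k : Fin n) := by abel
        rw [he] at hk
        push_cast
        rw [← hk]; exact ih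
  intro j
  conv_lhs => rw [← Fin.cast_val_eq_self j]
  exact key j.val

lemma T_eq_iff (hn : 3 ≤ n) {t s : Fin n → ℝ} (h : T n t = T n s) :
    ∃ c : ℝ, ∀ i, s i = t i + c := by
  have hd : ∀ w, (s - t) (w - 1) = (s - t) w := by
    intro w
    have h2 := congrFun h w
    rw [T_apply, T_apply] at h2
    simp only [Pi.sub_apply]
    linarith
  refine ⟨(s - t) 0, fun i => ?_⟩
  have h3 := cyc_const hn hd i
  simp only [Pi.sub_apply] at h3 ⊢
  linarith

lemma zon_eq (hn : 3 ≤ n) :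
    graphicalZonotope (SimpleGraph.cycleGraph n) = faceS n 0 := by
  ext x
  constructor
  · rintro ⟨c, hanti, hsupp, hbd, rfl⟩
    refine ⟨fun i => c (i + 1) i, ⟨fun i => hbd _ _, fun i h => absurd rfl h⟩, ?_⟩
    funext w
    rw [T_apply]
    have hv : ∀ u ∈ univ, u ∉ ({w - 1, w + 1} : Finset (Fin n)) → c w u = 0 := by
      intro u _ hu
      simp only [Finset.mem_insert, Finset.mem_singleton, not_or] at hu
      apply hsupp
      rw [adj_iff hn]
      rintro (h | h)
      · exact hu.1 (by rw [eq_sub_iff_add_eq, ← h])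
      · exact hu.2 h
    have hsum : ∑ u, c w u = ∑ u ∈ ({w - 1, w + 1} : Finset (Fin n)), c w u :=
      (Finset.sum_subset (Finset.subset_univ _) hv).symm
    rw [hsum, Finset.sum_pair (Ne.symm (add_one_ne_sub_one hn w))]
    have e1 : c w (w - 1) = c (w - 1 + 1) (w - 1) := by
      congr 1; abel
    have e2 : c w (w + 1) = - c (w + 1) w := hanti _ _
    rw [e1, e2]; ring
  · rintro ⟨t, ⟨hbd, -⟩, rfl⟩
    refine ⟨fun u v => (if u = v + 1 then t v else 0) - (if v = u + 1 then t u else 0),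
      fun u v => by ring, ?_, ?_, ?_⟩
    · intro u v hna
      rw [adj_iff hn] at hna
      push_neg at hna
      dsimp only
      rw [if_neg hna.1, if_neg hna.2, sub_zero]
    · intro u v
      dsimp only
      by_cases h1 : u = v + 1 <;> by_cases h2 : v = u + 1
      · exact absurd ⟨h1, h2⟩ (no_both hn)
      · rw [if_pos h1, if_neg h2, sub_zero]; exact hbd v
      · rw [if_neg h1, if_pos h2, zero_sub, abs_neg]; exact hbd u
      · rw [if_neg h1, if_neg h2, sub_zero, abs_zero]; norm_num
    · funext w
      rw [T_apply, Finset.sum_sub_distrib]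
      have e1 : ∀ u : Fin n, (if w = u + 1 then t u else 0) = (if u = w - 1 then t u else 0) := by
        intro u
        refine if_congr ?_ rfl rfl
        rw [eq_sub_iff_add_eq, eq_comm]
      rw [Finset.sum_congr rfl (fun u _ => e1 u)]
      simp [Finset.sum_ite_eq, Finset.sum_ite_eq']

lemma abs_cast_le (s : SignType) : |(s : ℝ)| ≤ 1 := by cases s <;> norm_num

lemma mul_sign_cast (a : ℝ) : a * ((SignType.sign a : SignType) : ℝ) = |a| := by
  rcases lt_trichotomy a 0 with h | h | h
  · rw [sign_neg h, abs_of_neg h]; norm_num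
  · simp [h]
  · rw [sign_pos h, abs_of_pos h]; norm_num

lemma mem_cubeF_zero {t : Fin n → ℝ} (h : ∀ i, |t i| ≤ 1) : t ∈ cubeF n 0 :=
  ⟨h, fun _ hi => absurd rfl hi⟩

lemma cubeF_subset (σ : Fin n → SignType) : cubeF n σ ⊆ cubeF n 0 :=
  fun _ ht => mem_cubeF_zero ht.1

lemma tstar_mem (σ : Fin n → SignType) : (fun i => ((σ i : SignType) : ℝ)) ∈ cubeF n σ :=
  ⟨fun i => abs_cast_le _, fun _ _ => rfl⟩

lemma core (hn : 3 ≤ n) (l : (Fin n → ℝ) →L[ℝ] ℝ) (a : Fin n → ℝ)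
    (ha : ∀ t, l (T n t) = ∑ i, a i * t i) :
    {x ∈ faceS n 0 | ∀ y ∈ faceS n 0, l y ≤ l x} = faceS n (fun i => SignType.sign (a i)) := by
  set σ : Fin n → SignType := fun i => SignType.sign (a i) with hσ
  set M : ℝ := ∑ i, |a i| with hMdef
  set tstar : Fin n → ℝ := fun i => ((σ i : SignType) : ℝ) with htsdef
  have htstar : tstar ∈ cubeF n σ := tstar_mem σ
  have hterm : ∀ (t : Fin n → ℝ), (∀ i, |t i| ≤ 1) → ∀ i ∈ univ, a i * t i ≤ |a i| := by
    intro t ht i _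
    calc a i * t i ≤ |a i * t i| := le_abs_self _
      _ = |a i| * |t i| := abs_mul _ _
      _ ≤ |a i| * 1 := mul_le_mul_of_nonneg_left (ht i) (abs_nonneg _)
      _ = |a i| := mul_one _
  have hub : ∀ t ∈ cubeF n 0, l (T n t) ≤ M := by
    intro t ht
    rw [ha]
    exact Finset.sum_le_sum (hterm t ht.1)
  have hM : l (T n tstar) = M := by
    rw [ha]
    exact Finset.sum_congr rfl fun i _ => mul_sign_cast (a i)
  have heq : ∀ t : Fin n → ℝ, (∀ i, |t i| ≤ 1) →
      (l (T n t) = M ↔ ∀ i, σ i ≠ 0 → t i = (σ i : ℝ)) := by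
    intro t ht
    rw [ha, hMdef, Finset.sum_eq_sum_iff_of_le (hterm t ht)]
    constructor
    · intro h i hi
      have hai : a i ≠ 0 := by
        simpa [hσ, sign_eq_zero_iff] using hi
      have hival := h i (mem_univ i)
      rcases hai.lt_or_gt with hlt | hlt
      · have : a i * t i = a i * (-1) := by rw [hival, abs_of_neg hlt]; ring
        have ht1 := mul_left_cancel₀ hai this
        rw [ht1, hσ]; simp [sign_neg hlt]
      · have : a i * t i = a i * 1 := by rw [hival, abs_of_pos hlt]; ring
        have ht1 := mul_left_cancel₀ hai this
        rw [ht1, hσ]; simp [sign_pos hlt]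
    · intro h i _
      by_cases hai : a i = 0
      · simp [hai]
      · have hσi : σ i ≠ 0 := by simpa [hσ, sign_eq_zero_iff] using hai
        rw [h i hσi]
        exact mul_sign_cast (a i)
  ext x
  simp only [Set.mem_setOf_eq, faceS, Set.mem_image]
  constructor
  · rintro ⟨⟨t, ht, rfl⟩, hmax⟩
    have hle : l (T n t) ≤ M := hub t ht
    have hge : M ≤ l (T n t) := by
      rw [← hM]
      exact hmax _ ⟨tstar, cubeF_subset σ htstar, rfl⟩
    exact ⟨t, ⟨ht.1, (heq t ht.1).mp (le_antisymm hle hge)⟩, rfl⟩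
  · rintro ⟨t, ht, rfl⟩
    have hTt : l (T n t) = M := (heq t ht.1).mpr ht.2
    refine ⟨⟨t, cubeF_subset σ ht, rfl⟩, ?_⟩
    rintro y ⟨s, hs, rfl⟩
    rw [hTt]
    exact hub s hs

noncomputable def lf (n : ℕ) (y : Fin n → ℝ) : (Fin n → ℝ) →L[ℝ] ℝ :=
  LinearMap.toContinuousLinearMap
    { toFun := fun x => ∑ w, y w * x w
      map_add' := fun s t => by
        simp only [Pi.add_apply, mul_add]
        rw [Finset.sum_add_distrib]
      map_smul' := fun c t => by
        simp only [Pi.smul_apply, smul_eq_mul, RingHom.id_apply, Finset.mul_sum]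
        exact Finset.sum_congr rfl fun w _ => by ring }

lemma lf_apply (y x : Fin n → ℝ) : lf n y x = ∑ w, y w * x w := rfl

noncomputable def ys (n : ℕ) (a : Fin n → ℝ) : Fin n → ℝ :=
  fun j => ∑ i ∈ univ.filter (fun i : Fin n => i.val < j.val), a i

lemma ys_step (hn : 3 ≤ n) (a : Fin n → ℝ) (hsum : ∑ i, a i = 0) (u : Fin n) :
    ys n a (u + 1) - ys n a u = a u := by
  have h1 : (1 : Fin n).val = 1 := by
    rw [Fin.val_one', Nat.mod_eq_of_lt (by omega)]
  have hu := u.isLt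
  by_cases h : u.val + 1 < n
  · have hval : (u + 1).val = u.val + 1 := by
      simp only [Fin.add_def, h1]
      exact Nat.mod_eq_of_lt h
    have hfil : univ.filter (fun i : Fin n => i.val < (u + 1).val)
        = insert u (univ.filter (fun i : Fin n => i.val < u.val)) := by
      ext i
      simp only [Finset.mem_filter, Finset.mem_univ, true_and, Finset.mem_insert, hval]
      constructor
      · intro hi
        rcases Nat.lt_succ_iff_lt_or_eq.mp hi with h' | h'
        · exact Or.inr h'
        · exact Or.inl (Fin.ext h')
      · rintro (rfl | h')
        · omega
        · omega
    rw [ys, ys, hfil, Finset.sum_insert (by simp)]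
    ring
  · have hval : (u + 1).val = 0 := by
      simp only [Fin.add_def, h1]
      rw [show u.val + 1 = n by omega, Nat.mod_self]
    have h2 : ys n a (u + 1) = 0 := by
      rw [ys, hval]
      simp
    have hfil : univ.filter (fun i : Fin n => i.val < u.val) = univ.erase u := by
      ext i
      have hi := i.isLt
      simp only [Finset.mem_filter, Finset.mem_univ, true_and, Finset.mem_erase, and_true]
      rw [Fin.ne_iff_vne]
      omega
    have h3 : ys n a u = 0 - a u := by
      rw [ys, hfil, Finset.sum_erase_eq_sub (mem_univ u), hsum]
    rw [h2, h3]; ring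

lemma lf_T (hn : 3 ≤ n) (a : Fin n → ℝ) (hsum : ∑ i, a i = 0) (t : Fin n → ℝ) :
    lf n (ys n a) (T n t) = ∑ i, a i * t i := by
  rw [lf_apply]
  simp only [T_apply]
  have e1 : ∑ w, ys n a w * (t (w - 1) - t w)
      = (∑ w, ys n a w * t (w - 1)) - ∑ w, ys n a w * t w := by
    rw [← Finset.sum_sub_distrib]
    exact Finset.sum_congr rfl fun w _ => by ring
  have e2 : ∑ w, ys n a w * t (w - 1) = ∑ u, ys n a (u + 1) * t u := by
    apply Fintype.sum_equiv (Equiv.subRight (1 : Fin n))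
    intro x
    have hx : x - 1 + 1 = x := by abel
    rw [Equiv.subRight_apply, hx]
  rw [e1, e2, ← Finset.sum_sub_distrib]
  refine Finset.sum_congr rfl fun u _ => ?_
  rw [← ys_step hn a hsum u]
  ring

noncomputable def aOf (σ : Fin n → SignType) : Fin n → ℝ := fun i =>
  if σ i = 1 then ((univ.filter (fun j => σ j = -1)).card : ℝ)
  else if σ i = -1 then -((univ.filter (fun j => σ j = 1)).card : ℝ) else 0

lemma aOf_sum (σ : Fin n → SignType) : ∑ i, aOf σ i = 0 := by
  set p := (univ.filter (fun j => σ j = 1)).card with hp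
  set m := (univ.filter (fun j => σ j = -1)).card with hm
  have e : ∀ i, aOf σ i
      = (if σ i = 1 then (m : ℝ) else 0) + (if σ i = -1 then -(p : ℝ) else 0) := by
    intro i
    cases h : σ i <;> simp [aOf, h] <;> rfl
  rw [Finset.sum_congr rfl fun i _ => e i, Finset.sum_add_distrib,
    ← Finset.sum_filter, ← Finset.sum_filter, Finset.sum_const, Finset.sum_const,
    ← hp, ← hm, nsmul_eq_mul, nsmul_eq_mul]
  ring

lemma aOf_sign (σ : Fin n → SignType) (hadm : Adm σ) (i : Fin n) :
    SignType.sign (aOf σ i) = σ i := by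
  rcases hadm with rfl | ⟨⟨ip, hip⟩, ⟨im, him⟩⟩
  · simp [aOf]
  · have hp : 0 < ((univ.filter (fun j => σ j = 1)).card : ℝ) := by
      have : ip ∈ univ.filter (fun j => σ j = 1) := by simp [hip]
      have := Finset.card_pos.mpr ⟨ip, this⟩
      exact_mod_cast this
    have hm : 0 < ((univ.filter (fun j => σ j = -1)).card : ℝ) := by
      have : im ∈ univ.filter (fun j => σ j = -1) := by simp [him]
      have := Finset.card_pos.mpr ⟨im, this⟩
      exact_mod_cast this
    cases h : σ i
    · simp [aOf, h]
    · have : aOf σ i = -((univ.filter (fun j => σ j = 1)).card : ℝ) := by simp [aOf, h]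
      rw [this, sign_neg (by linarith)]
      decide
    · have : aOf σ i = ((univ.filter (fun j => σ j = -1)).card : ℝ) := by simp [aOf, h]
      rw [this, sign_pos hm]
      decide

lemma faceS_nonempty (σ : Fin n → SignType) : (faceS n σ).Nonempty :=
  ⟨T n (fun i => ((σ i : SignType) : ℝ)), _, tstar_mem σ, rfl⟩

lemma faceS_exposed (hn : 3 ≤ n) (σ : Fin n → SignType) (hadm : Adm σ) :
    IsExposed ℝ (faceS n 0) (faceS n σ) := by
  intro _
  refine ⟨lf n (ys n (aOf σ)), ?_⟩
  have hc := core hn (lf n (ys n (aOf σ))) (aOf σ) (lf_T hn (aOf σ) (aOf_sum σ))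
  have h2 : (fun i => SignType.sign (aOf σ i)) = σ := funext (aOf_sign σ hadm)
  rw [h2] at hc
  exact hc.symm

lemma exposed_classify (hn : 3 ≤ n) {F : Set (Fin n → ℝ)} (hne : F.Nonempty)
    (hexp : IsExposed ℝ (faceS n 0) F) : ∃ σ, Adm σ ∧ F = faceS n σ := by
  obtain ⟨l, rfl⟩ := hexp hne
  set a : Fin n → ℝ := fun i => l (T n (eB n i)) with hadef
  have hT1 : T n (fun _ => (1 : ℝ)) = 0 := funext fun w => by rw [T_apply]; simp
  have hEsum : (∑ i, eB n i) = fun _ => (1 : ℝ) := by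
    funext j
    rw [Finset.sum_apply]
    simp [eB]
  have hsum : ∑ i, a i = 0 := by
    rw [hadef, ← map_sum, ← map_sum, hEsum, hT1, map_zero]
  have ha : ∀ t, l (T n t) = ∑ i, a i * t i := by
    intro t
    conv_lhs => rw [pi_eq_sum_univ t, map_sum, map_sum]
    refine Finset.sum_congr rfl fun i _ => ?_
    rw [map_smul, map_smul]
    simp only [smul_eq_mul]
    rw [mul_comm]
    rfl
  refine ⟨fun i => SignType.sign (a i), ?_, core hn l a ha⟩
  by_cases hz : (fun i => SignType.sign (a i)) = (0 : Fin n → SignType)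
  · exact Or.inl hz
  · right
    obtain ⟨i, hi⟩ := Function.ne_iff.mp hz
    have hai : a i ≠ 0 := by
      intro h
      exact hi (by simp [h])
    have hpos : ∃ j, 0 < a j := by
      by_contra hno
      push_neg at hno
      rcases hai.lt_or_gt with hlt | hlt
      · have : ∑ j, a j < ∑ _j : Fin n, (0 : ℝ) :=
          Finset.sum_lt_sum (fun j _ => hno j) ⟨i, mem_univ i, hlt⟩
        rw [Finset.sum_const_zero] at this
        linarith [hsum ▸ this]
      · linarith [hno i]
    have hneg : ∃ j, a j < 0 := by
      by_contra hno
      push_neg at hno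
      rcases hai.lt_or_gt with hlt | hlt
      · linarith [hno i]
      · have : ∑ _j : Fin n, (0 : ℝ) < ∑ j, a j :=
          Finset.sum_lt_sum (fun j _ => hno j) ⟨i, mem_univ i, hlt⟩
        rw [Finset.sum_const_zero] at this
        linarith [hsum ▸ this]
    obtain ⟨jp, hjp⟩ := hpos
    obtain ⟨jm, hjm⟩ := hneg
    exact ⟨⟨jp, sign_pos hjp⟩, ⟨jm, sign_neg hjm⟩⟩

lemma st_cast_inj {s t : SignType} (h : (s : ℝ) = (t : ℝ)) : s = t := by
  cases s <;> cases t <;> first | rfl | (exfalso; norm_num [SignType.coe_zero] at h)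

lemma shift_of_mem (hn : 3 ≤ n) {τ : Fin n → SignType} {t : Fin n → ℝ}
    (h : T n t ∈ faceS n τ) : ∃ c : ℝ, (fun i => t i + c) ∈ cubeF n τ := by
  obtain ⟨s, hs, heq⟩ := h
  obtain ⟨c, hc⟩ := T_eq_iff hn heq
  refine ⟨-c, ?_⟩
  have : (fun i => t i + -c) = s := by
    funext i
    rw [hc i]
    ring
  rw [this]
  exact hs

lemma subset_match (hn : 3 ≤ n) {σ τ : Fin n → SignType}
    (ip : Fin n) (hip : σ ip = 1) (im : Fin n) (him : σ im = -1)
    (h : faceS n σ ⊆ faceS n τ) : ∀ i, τ i ≠ 0 → σ i = τ i := by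
  have hmem : T n (fun i => ((σ i : SignType) : ℝ)) ∈ faceS n τ :=
    h ⟨_, tstar_mem σ, rfl⟩
  obtain ⟨c, hc⟩ := shift_of_mem hn hmem
  have hcle : c ≤ 0 := by
    have h1 := (abs_le.mp (hc.1 ip)).2
    simp only [hip] at h1
    norm_num at h1
    linarith
  have hcge : 0 ≤ c := by
    have h1 := (abs_le.mp (hc.1 im)).1
    simp only [him] at h1
    norm_num at h1
    linarith
  have hc0 : c = 0 := le_antisymm hcle hcge
  intro i hi
  have h2 := hc.2 i hi
  simp only [hc0, add_zero] at h2
  exact st_cast_inj h2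

lemma zero_not_sub (hn : 3 ≤ n) {τ : Fin n → SignType}
    (ip : Fin n) (hip : τ ip = 1) (im : Fin n) (him : τ im = -1)
    (h : faceS n 0 ⊆ faceS n τ) : False := by
  have hmem : T n (fun _ => (0 : ℝ)) ∈ faceS n τ :=
    h ⟨_, mem_cubeF_zero (fun i => by norm_num), rfl⟩
  obtain ⟨c, hc⟩ := shift_of_mem hn hmem
  have h1 := hc.2 ip (by rw [hip]; decide)
  have h2 := hc.2 im (by rw [him]; decide)
  rw [hip] at h1
  rw [him] at h2
  norm_num at h1 h2
  rw [h1] at h2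
  norm_num at h2

lemma faceS_inj (hn : 3 ≤ n) {σ τ : Fin n → SignType} (hσ : Adm σ) (hτ : Adm τ)
    (h : faceS n σ = faceS n τ) : σ = τ := by
  rcases hσ with rfl | ⟨⟨ip, hip⟩, ⟨im, him⟩⟩
  · rcases hτ with rfl | ⟨⟨jp, hjp⟩, ⟨jm, hjm⟩⟩
    · rfl
    · exact absurd (zero_not_sub hn jp hjp jm hjm h.le) id
  · rcases hτ with rfl | ⟨⟨jp, hjp⟩, ⟨jm, hjm⟩⟩
    · exact absurd (zero_not_sub hn ip hip im him h.symm.le) id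
    · have hA := subset_match hn ip hip im him h.le
      have hB := subset_match hn jp hjp jm hjm h.symm.le
      funext i
      by_cases hτi : τ i = 0
      · by_cases hσi : σ i = 0
        · rw [hσi, hτi]
        · exact absurd ((hB i hσi) ▸ hτi) hσi
      · exact hA i hτi

lemma supported_sum {P : Fin n → Prop} [DecidablePred P] {f : Fin n → ℝ}
    (hf : ∀ i, ¬ P i → f i = 0) : f = ∑ i ∈ univ.filter P, f i • eB n i := by
  funext j
  rw [Finset.sum_apply]
  simp only [Pi.smul_apply, eB, smul_eq_mul, mul_ite, mul_one, mul_zero]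
  rw [Finset.sum_ite_eq' (univ.filter P) j f]
  by_cases hj : P j
  · rw [if_pos (by simp [hj])]
  · rw [if_neg (by simp [hj]), hf j hj]

lemma hT_one : T n (fun _ => (1 : ℝ)) = 0 := funext fun w => by rw [T_apply]; simp

lemma hE_sum : (∑ i, eB n i) = fun _ => (1 : ℝ) := by
  funext j
  rw [Finset.sum_apply]
  simp [eB]

lemma vspan (hn : 3 ≤ n) (σ : Fin n → SignType) :
    vectorSpan ℝ (faceS n σ)
      = Submodule.span ℝ ((fun i => T n (eB n i)) '' {i | σ i = 0}) := by
  apply le_antisymm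
  · rw [vectorSpan_def]
    apply Submodule.span_le.mpr
    rintro x hx
    rw [Set.mem_vsub] at hx
    obtain ⟨x1, hx1, x2, hx2, rfl⟩ := hx
    obtain ⟨t, ht, rfl⟩ := hx1
    obtain ⟨s, hs, rfl⟩ := hx2
    have hsub : T n t -ᵥ T n s = T n (t - s) := by
      rw [vsub_eq_sub, ← map_sub]
    rw [hsub]
    have hsupp : ∀ i, ¬ (σ i = 0) → (t - s) i = 0 := by
      intro i hi
      have h1 := ht.2 i hi
      have h2 := hs.2 i hi
      simp only [Pi.sub_apply, h1, h2, sub_self]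
    rw [supported_sum hsupp, map_sum]
    apply Submodule.sum_mem
    intro i hi
    rw [map_smul]
    apply Submodule.smul_mem
    apply Submodule.subset_span
    exact ⟨i, by simpa using hi, rfl⟩
  · apply Submodule.span_le.mpr
    rintro x ⟨i, hi, rfl⟩
    set tstar : Fin n → ℝ := fun j => ((σ j : SignType) : ℝ) with hts
    have hts0 : tstar i = 0 := by rw [hts]; simp [Set.mem_setOf_eq.mp hi]
    have hmem2 : tstar + eB n i ∈ cubeF n σ := by
      constructor
      · intro j
        by_cases hj : j = i
        · subst hj
          simp only [Pi.add_apply, hts0, eB, if_pos rfl, zero_add]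
          norm_num
        · simp only [Pi.add_apply, eB, if_neg (Ne.symm hj), add_zero]
          exact abs_cast_le _
      · intro j hj
        have hji : j ≠ i := by
          intro hh
          exact hj (by rw [hh]; exact Set.mem_setOf_eq.mp hi)
        simp only [Pi.add_apply, eB, if_neg (Ne.symm hji), add_zero, hts]
    have hdiff : T n (eB n i) = T n (tstar + eB n i) -ᵥ T n tstar := by
      rw [vsub_eq_sub, map_add]
      abel
    dsimp only
    rw [hdiff]
    exact vsub_mem_vectorSpan ℝ ⟨_, hmem2, rfl⟩ ⟨_, tstar_mem σ, rfl⟩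

lemma linind (hn : 3 ≤ n) (P : Fin n → Prop) [DecidablePred P] (i0 : Fin n) (hi0 : ¬ P i0) :
    LinearIndependent ℝ (fun i : {i // P i} => T n (eB n i.val)) := by
  rw [Fintype.linearIndependent_iff]
  intro c hc i
  set d : Fin n → ℝ := fun j => if h : P j then c ⟨j, h⟩ else 0 with hd
  have hsum : (∑ j : {i // P i}, c j • eB n j.val) = d := by
    funext w
    rw [Finset.sum_apply]
    simp only [Pi.smul_apply, eB, smul_eq_mul, mul_ite, mul_one, mul_zero]
    by_cases hw : P w
    · rw [Finset.sum_eq_single ⟨w, hw⟩]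
      · rw [if_pos rfl, hd]
        simp [dif_pos hw]
      · intro j _ hj
        rw [if_neg]
        intro hh
        exact hj (Subtype.ext hh)
      · intro hj
        exact absurd (mem_univ _) hj
    · rw [Finset.sum_eq_zero, hd]
      · simp [dif_neg hw]
      · intro j _
        rw [if_neg]
        intro hh
        rw [← hh] at hw
        exact hw j.2
  have hTd : T n d = 0 := by
    calc T n d = ∑ j : {i // P i}, c j • T n (eB n j.val) := by
          rw [← hsum, map_sum]
          exact Finset.sum_congr rfl fun j _ => map_smul _ _ _
    _ = 0 := hc
  have hdc : ∀ w, d (w - 1) = d w := by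
    intro w
    have h2 := congrFun hTd w
    rw [T_apply] at h2
    have : (0 : Fin n → ℝ) w = 0 := rfl
    rw [this] at h2
    linarith
  have hall := cyc_const hn hdc
  have hd0 : d i0 = 0 := dif_neg hi0
  have hzero : d i.val = 0 := by rw [hall i.val, ← hall i0, hd0]
  rw [hd] at hzero
  simpa [dif_pos i.2] using hzero

lemma dim_ne (hn : 3 ≤ n) (σ : Fin n → SignType) (i0 : Fin n) (hi0 : σ i0 ≠ 0) :
    Module.finrank ℝ
      (Submodule.span ℝ ((fun i => T n (eB n i)) '' {i | σ i = 0})) = zed σ := by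
  have hli := linind hn (fun i => σ i = 0) i0 hi0
  rw [Set.image_eq_range]
  have hr : Set.range (fun x : ↥{i | σ i = 0} => T n (eB n x.val))
      = Set.range (fun i : {i // σ i = 0} => T n (eB n i.val)) := rfl
  rw [hr, finrank_span_eq_card hli, Fintype.card_subtype]
  rfl

lemma dim_zero_case (hn : 3 ≤ n) :
    Module.finrank ℝ (Submodule.span ℝ
      ((fun i => T n (eB n i)) '' {i : Fin n | (0 : Fin n → SignType) i = 0})) = n - 1 := by
  haveI : NeZero n := ‹_›
  have h1 : {i : Fin n | (0 : Fin n → SignType) i = 0} = Set.univ := by ext i; simp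
  have hTsum : ∑ i : Fin n, T n (eB n i) = 0 := by
    rw [← map_sum, hE_sum, hT_one]
  have hspan : Submodule.span ℝ ((fun i => T n (eB n i)) '' Set.univ)
      = Submodule.span ℝ ((fun i => T n (eB n i)) '' {i : Fin n | i ≠ 0}) := by
    apply le_antisymm
    · apply Submodule.span_le.mpr
      rintro x ⟨i, -, rfl⟩
      by_cases hi : i = 0
      · subst hi
        have he : T n (eB n 0) = -∑ j ∈ univ.erase 0, T n (eB n j) := by
          apply eq_neg_of_add_eq_zero_left
          exact (Finset.add_sum_erase (univ : Finset (Fin n))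
            (fun j => T n (eB n j)) (mem_univ 0)).trans hTsum
        dsimp only
        rw [he]
        apply Submodule.neg_mem
        apply Submodule.sum_mem
        intro j hj
        exact Submodule.subset_span ⟨j, (Finset.mem_erase.mp hj).1, rfl⟩
      · exact Submodule.subset_span ⟨i, hi, rfl⟩

    · exact Submodule.span_mono (Set.image_mono (Set.subset_univ _))
  rw [h1, hspan, Set.image_eq_range]
  have hr : Set.range (fun x : ↥{i : Fin n | i ≠ 0} => T n (eB n x.val))
      = Set.range (fun i : {i : Fin n // i ≠ 0} => T n (eB n i.val)) := rfl
  rw [hr, finrank_span_eq_card (linind hn (fun i => i ≠ (0 : Fin n)) 0 (by simp))]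
  rw [Fintype.card_subtype_compl, Fintype.card_subtype_eq, Fintype.card_fin]

lemma dim_faceS (hn : 3 ≤ n) (σ : Fin n → SignType) :
    Module.finrank ℝ (affineSpan ℝ (faceS n σ)).direction = dimF n σ := by
  rw [direction_affineSpan, vspan hn σ]
  rcases eq_or_ne σ 0 with rfl | h
  · rw [dimF, if_pos rfl]
    exact dim_zero_case hn
  · rw [dimF, if_neg h]
    obtain ⟨i0, hi0⟩ := Function.ne_iff.mp h
    exact dim_ne hn σ i0 hi0

lemma faceCount_eq (hn : 3 ≤ n) (k : ℕ) :
    faceCount (SimpleGraph.cycleGraph n) k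
      = Nat.card {σ : Fin n → SignType // Adm σ ∧ dimF n σ = k} := by
  let f : {σ : Fin n → SignType // Adm σ ∧ dimF n σ = k} →
      { F : Set (Fin n → ℝ) // F.Nonempty ∧
        IsExposed ℝ (graphicalZonotope (SimpleGraph.cycleGraph n)) F ∧
        Module.finrank ℝ (affineSpan ℝ F).direction = k } :=
    fun σp => ⟨faceS n σp.val, faceS_nonempty _,
      by rw [zon_eq hn]; exact faceS_exposed hn _ σp.2.1,
      by rw [dim_faceS hn]; exact σp.2.2⟩
  have hbij : Function.Bijective f := by
    constructor
    · intro s1 s2 h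
      exact Subtype.ext (faceS_inj hn s1.2.1 s2.2.1 (congrArg Subtype.val h))
    · rintro ⟨F, hne, hexp, hdim⟩
      rw [zon_eq hn] at hexp
      obtain ⟨σ, hadm, rfl⟩ := exposed_classify hn hne hexp
      exact ⟨⟨σ, hadm, by rw [← dim_faceS hn σ]; exact hdim⟩, Subtype.ext rfl⟩
  exact (Nat.card_eq_of_bijective f hbij).symm

open Polynomial in
lemma count_formula (hn : 3 ≤ n) :
    ∑ k ∈ Finset.range n,
        ((Nat.card {σ : Fin n → SignType // Adm σ ∧ dimF n σ = k}) : Polynomial ℤ) * X ^ k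
      = X ^ n + X ^ (n - 1) + (X + 2) ^ n - 2 * (X + 1) ^ n := by
  classical
  have hcard : ∀ k, Nat.card {σ : Fin n → SignType // Adm σ ∧ dimF n σ = k}
      = ((univ.filter (fun σ : Fin n → SignType => Adm σ ∧ dimF n σ = k)).card) := by
    intro k
    rw [Nat.card_eq_fintype_card, Fintype.card_subtype]
  have hlt : ∀ σ : Fin n → SignType, Adm σ → dimF n σ < n := by
    intro σ hadm
    rcases hadm with rfl | ⟨⟨ip, hip⟩, -⟩
    · rw [dimF, if_pos rfl]; omega
    · have hσ0 : σ ≠ 0 := by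
        intro h; rw [h, Pi.zero_apply] at hip; exact absurd hip (by decide)
      rw [dimF, if_neg hσ0]
      have hsub : univ.filter (fun i => σ i = 0) ⊆ univ.erase ip := by
        intro i hi
        rw [Finset.mem_erase]
        refine ⟨?_, mem_univ i⟩
        intro h
        rw [Finset.mem_filter] at hi
        rw [h, hip] at hi
        exact absurd hi.2 (by decide)
      have hle := Finset.card_le_card hsub
      rw [Finset.card_erase_of_mem (mem_univ ip), Finset.card_univ, Fintype.card_fin] at hle
      calc zed σ ≤ n - 1 := hle
        _ < n := by omega
  have step2 : ∑ k ∈ Finset.range n,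
      ((Nat.card {σ : Fin n → SignType // Adm σ ∧ dimF n σ = k}) : Polynomial ℤ) * X ^ k
      = ∑ σ ∈ univ.filter (fun σ : Fin n → SignType => Adm σ), X ^ (dimF n σ) := by
    rw [← Finset.sum_fiberwise_of_maps_to
      (g := fun σ : Fin n → SignType => dimF n σ)
      (t := Finset.range n)
      (fun σ hσ => Finset.mem_range.mpr (hlt σ (Finset.mem_filter.mp hσ).2))
      (fun σ => (X : Polynomial ℤ) ^ (dimF n σ))]
    refine Finset.sum_congr rfl fun k _ => ?_
    rw [hcard, Finset.filter_filter]
    rw [Finset.sum_congr rfl (fun σ hσ => by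
      rw [(Finset.mem_filter.mp hσ).2.2] : ∀ σ ∈ _, (X : Polynomial ℤ) ^ dimF n σ = X ^ k)]
    rw [Finset.sum_const, nsmul_eq_mul]
  rw [step2]
  -- split off σ = 0
  have hsplit : univ.filter (fun σ : Fin n → SignType => Adm σ)
      = univ.filter (fun σ : Fin n → SignType => σ = 0)
        ∪ univ.filter (fun σ : Fin n → SignType => (∃ i, σ i = 1) ∧ (∃ i, σ i = -1)) := by
    ext σ
    simp only [Finset.mem_filter, Finset.mem_union, mem_univ, true_and]
    exact Iff.rfl
  have hdisj : Disjoint (univ.filter (fun σ : Fin n → SignType => σ = 0))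
      (univ.filter (fun σ : Fin n → SignType => (∃ i, σ i = 1) ∧ (∃ i, σ i = -1))) := by
    rw [Finset.disjoint_left]
    intro σ h1 h2
    rw [Finset.mem_filter] at h1 h2
    obtain ⟨i, hi⟩ := h2.2.1
    rw [h1.2, Pi.zero_apply] at hi
    exact absurd hi (by decide)
  rw [hsplit, Finset.sum_union hdisj, Finset.filter_eq', if_pos (mem_univ _),
    Finset.sum_singleton]
  have hdim0 : dimF n (0 : Fin n → SignType) = n - 1 := by rw [dimF, if_pos rfl]
  rw [hdim0]
  -- the both-signs part
  set wt : SignType → Polynomial ℤ := fun s => if s = 0 then (X : Polynomial ℤ) else 1 with hwt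
  have hwt_prod : ∀ σ : Fin n → SignType, (∏ i, wt (σ i)) = (X : Polynomial ℤ) ^ zed σ := by
    intro σ
    calc ∏ i, wt (σ i)
        = (∏ _i ∈ univ.filter (fun i => σ i = 0), (X : Polynomial ℤ))
          * ∏ _i ∈ univ.filter (fun i => ¬ σ i = 0), (1 : Polynomial ℤ) :=
          Finset.prod_ite (fun _ => (X : Polynomial ℤ)) (fun _ => (1 : Polynomial ℤ))
      _ = (X : Polynomial ℤ) ^ zed σ := by
          rw [Finset.prod_const, Finset.prod_const_one, mul_one, zed]
  have hdim_ne : ∀ σ : Fin n → SignType, (∃ i, σ i = 1) → dimF n σ = zed σ := by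
    intro σ ⟨i, hi⟩
    rw [dimF, if_neg]
    intro h
    rw [h, Pi.zero_apply] at hi
    exact absurd hi (by decide)
  have hmach : ∀ w : SignType → Polynomial ℤ,
      (∑ σ : Fin n → SignType, ∏ i, w (σ i)) = (w 0 + w (-1) + w 1) ^ n := by
    intro w
    have h1 : (∑ s : SignType, w s) = w 0 + w (-1) + w 1 := by
      rw [show (univ : Finset SignType) = {0, -1, 1} by decide]
      rw [Finset.sum_insert (by decide), Finset.sum_insert (by decide), Finset.sum_singleton]
      ring
    calc ∑ σ : Fin n → SignType, ∏ i, w (σ i)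
        = ∏ _i : Fin n, ∑ s : SignType, w s := (Fintype.prod_sum (fun _ s => w s)).symm
      _ = (w 0 + w (-1) + w 1) ^ n := by
          rw [h1, Finset.prod_const, Finset.card_univ, Fintype.card_fin]
  have hres : ∀ b : SignType,
      (∑ σ ∈ univ.filter (fun σ : Fin n → SignType => ∀ i, σ i ≠ b), ∏ i, wt (σ i))
      = ∑ σ : Fin n → SignType, ∏ i, (if σ i = b then 0 else wt (σ i)) := by
    intro b
    rw [← Finset.sum_filter_add_sum_filter_not univ (fun σ : Fin n → SignType => ∀ i, σ i ≠ b)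
      (fun σ => ∏ i, (if σ i = b then 0 else wt (σ i)))]
    have hz : (∑ σ ∈ univ.filter (fun σ : Fin n → SignType => ¬ ∀ i, σ i ≠ b),
        ∏ i, (if σ i = b then 0 else wt (σ i))) = 0 := by
      apply Finset.sum_eq_zero
      intro σ hσ
      rw [Finset.mem_filter] at hσ
      push_neg at hσ
      obtain ⟨i, hi⟩ := hσ.2
      exact Finset.prod_eq_zero (mem_univ i) (by rw [if_pos hi])
    rw [hz, add_zero]
    apply Finset.sum_congr rfl
    intro σ hσ
    rw [Finset.mem_filter] at hσ
    exact Finset.prod_congr rfl fun i _ => by rw [if_neg (hσ.2 i)]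
  -- inclusion-exclusion
  have hP := Finset.sum_filter_add_sum_filter_not univ
    (fun σ : Fin n → SignType => (∀ i, σ i ≠ 1) ∨ (∀ i, σ i ≠ -1))
    (fun σ => ∏ i, wt (σ i))
  have hnotP : univ.filter (fun σ : Fin n → SignType => ¬ ((∀ i, σ i ≠ 1) ∨ (∀ i, σ i ≠ -1)))
      = univ.filter (fun σ : Fin n → SignType => (∃ i, σ i = 1) ∧ (∃ i, σ i = -1)) := by
    ext σ
    simp only [Finset.mem_filter, mem_univ, true_and, not_or, not_forall, not_not]
  have hPor : univ.filter (fun σ : Fin n → SignType => (∀ i, σ i ≠ 1) ∨ (∀ i, σ i ≠ -1))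
      = univ.filter (fun σ : Fin n → SignType => ∀ i, σ i ≠ 1)
        ∪ univ.filter (fun σ : Fin n → SignType => ∀ i, σ i ≠ -1) := Finset.filter_or _ _ _
  have hui := Finset.sum_union_inter
    (s₁ := univ.filter (fun σ : Fin n → SignType => ∀ i, σ i ≠ 1))
    (s₂ := univ.filter (fun σ : Fin n → SignType => ∀ i, σ i ≠ -1))
    (f := fun σ : Fin n → SignType => ∏ i, wt (σ i))
  have hinter : univ.filter (fun σ : Fin n → SignType => ∀ i, σ i ≠ 1)
      ∩ univ.filter (fun σ : Fin n → SignType => ∀ i, σ i ≠ -1) = {0} := by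
    ext σ
    simp only [Finset.mem_inter, Finset.mem_filter, mem_univ, true_and, Finset.mem_singleton]
    constructor
    · rintro ⟨h1, h2⟩
      funext i
      cases h : σ i
      · rfl
      · exact absurd h (h2 i)
      · exact absurd h (h1 i)
    · rintro rfl
      constructor <;> intro i <;> simp only [Pi.zero_apply] <;> decide
  -- evaluate the four sums
  have hall : (∑ σ : Fin n → SignType, ∏ i, wt (σ i)) = (X + 2) ^ n := by
    rw [hmach wt]
    have e0 : wt 0 = X := if_pos rfl
    have em : wt (-1) = (1 : Polynomial ℤ) := if_neg (by decide)
    have ep : wt 1 = (1 : Polynomial ℤ) := if_neg (by decide)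
    rw [e0, em, ep]; ring
  have hnop : (∑ σ ∈ univ.filter (fun σ : Fin n → SignType => ∀ i, σ i ≠ 1), ∏ i, wt (σ i))
      = (X + 1) ^ n := by
    rw [hres 1, hmach (fun s => if s = 1 then 0 else wt s)]
    have e0 : (if (0 : SignType) = 1 then 0 else wt 0) = X := by
      rw [if_neg (by decide)]; exact if_pos rfl
    have em : (if (-1 : SignType) = 1 then 0 else wt (-1)) = (1 : Polynomial ℤ) := by
      rw [if_neg (by decide)]; exact if_neg (by decide)
    have ep : (if (1 : SignType) = 1 then (0 : Polynomial ℤ) else wt 1) = 0 := if_pos rfl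
    rw [e0, em, ep]; ring
  have hnom : (∑ σ ∈ univ.filter (fun σ : Fin n → SignType => ∀ i, σ i ≠ -1), ∏ i, wt (σ i))
      = (X + 1) ^ n := by
    rw [hres (-1), hmach (fun s => if s = -1 then 0 else wt s)]
    have e0 : (if (0 : SignType) = -1 then 0 else wt 0) = X := by
      rw [if_neg (by decide)]; exact if_pos rfl
    have em : (if (-1 : SignType) = -1 then (0 : Polynomial ℤ) else wt (-1)) = 0 := if_pos rfl
    have ep : (if (1 : SignType) = -1 then 0 else wt 1) = (1 : Polynomial ℤ) := by
      rw [if_neg (by decide)]; exact if_neg (by decide)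
    rw [e0, em, ep]; ring
  have hzero : (∑ σ ∈ ({0} : Finset (Fin n → SignType)), ∏ i, wt (σ i)) = X ^ n := by
    rw [Finset.sum_singleton]
    have : ∀ i : Fin n, wt ((0 : Fin n → SignType) i) = X := by
      intro i; rw [Pi.zero_apply]; exact if_pos rfl
    rw [Finset.prod_congr rfl (fun i _ => this i), Finset.prod_const, Finset.card_univ,
      Fintype.card_fin]
  -- assemble
  have hBoth : (∑ σ ∈ univ.filter
        (fun σ : Fin n → SignType => (∃ i, σ i = 1) ∧ (∃ i, σ i = -1)), ∏ i, wt (σ i))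
      = (X + 2) ^ n - 2 * (X + 1) ^ n + X ^ n := by
    have e1 := hP
    rw [hnotP, hPor] at e1
    rw [hinter, hzero] at hui
    rw [hnop, hnom] at hui
    -- e1 : sum_union + Both = all ; hui : sum_union + X^n = (X+1)^n + (X+1)^n
    rw [hall] at e1
    have e2 : (∑ σ ∈ (univ.filter (fun σ : Fin n → SignType => ∀ i, σ i ≠ 1)
        ∪ univ.filter (fun σ : Fin n → SignType => ∀ i, σ i ≠ -1)), ∏ i, wt (σ i))
        = (X + 1) ^ n + (X + 1) ^ n - X ^ n := by
      rw [← hui]; ring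
    rw [e2] at e1
    linear_combination e1
  have hBoth' : (∑ σ ∈ univ.filter
        (fun σ : Fin n → SignType => (∃ i, σ i = 1) ∧ (∃ i, σ i = -1)), (X : Polynomial ℤ) ^ dimF n σ)
      = ((X : Polynomial ℤ) + 2) ^ n - 2 * (X + 1) ^ n + X ^ n := by
    rw [← hBoth]
    apply Finset.sum_congr rfl
    intro σ hσ
    rw [Finset.mem_filter] at hσ
    rw [hdim_ne σ hσ.2.1, ← hwt_prod σ]
  rw [hBoth']
  ring

end CZ

/-- `f(Z_{C_n}, q) = q^n + q^{n-1} + (q+2)^n - 2(q+1)^n`. -/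
theorem fPolynomial_graphicalZonotope_cycleGraph (n : ℕ) (hn : 3 ≤ n) :
    ∑ k ∈ Finset.range n, (faceCount (SimpleGraph.cycleGraph n) k : Polynomial ℤ) * X ^ k
      = X ^ n + X ^ (n - 1) + (X + 2) ^ n - 2 * (X + 1) ^ n := by
  haveI : NeZero n := ⟨by omega⟩
  rw [Finset.sum_congr rfl (fun k _ => by rw [CZ.faceCount_eq hn k])]
  exact CZ.count_formula hn
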